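/- If a set H² admits a simply transitive action of an abelian group Z, and similarly each H²ᵢ admits a simply transitive Zᵢ-action compatibly with restriction maps, then patching (the equalizer property) for the Z-groups together with nonemptiness of the global H² implies patching for the H²-sets. Precisely: let Z, Zᵢ (i in a finite index set I_v), Z_k (k in I_e) be abelian groups with maps Z → Zᵢ and, for each triple (i,j,k) in S_I, maps Zᵢ → Z_k and Z_j → Z_k, such that the sequence Z → ∏ᵢ Zᵢ ⇉ ∏_k Z_k is an equalizer. Let H, Hᵢ, H_k be sets with simply transitive actions of Z, Zᵢ, Z_k respectively and equivariant maps H → Hᵢ, Hᵢ → H_k, H_j → H_k (equivariant with respect to the corresponding group maps). If H is nonempty, then H → ∏ᵢ Hᵢ ⇉ ∏_k H_k is an equalizer diagram of sets: every family (βᵢ) with matching images in each H_k comes from a unique β in H. -/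
import Mathlib


open CategoryTheory


/-- Patching for simply transitive actions (abstract form of Proposition `patching-coho`):
if the abelian coefficient groups form an equalizer diagram and the global `H²`-set is
nonempty, then the `H²`-sets form an equalizer diagram. -/
theorem patching_H2_of_patching_center {Iv Ie : Type} [Finite Iv] [Finite Ie]
    (S : Set (Iv × Iv × Ie))
    (Z : Type) [CommGroup Z] (Zv : Iv → Type) [∀ i, CommGroup (Zv i)]
    (Ze : Ie → Type) [∀ k, CommGroup (Ze k)]
    (φ : ∀ i, Z →* Zv i)
    (r1 : ∀ p : Iv × Iv × Ie, p ∈ S → (Zv p.1 →* Ze p.2.2))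
    (r2 : ∀ p : Iv × Iv × Ie, p ∈ S → (Zv p.2.1 →* Ze p.2.2))
    -- the groups form an equalizer diagram `Z → ∏ᵢ Zᵢ ⇉ ∏ₖ Zₖ`:
    (hZinj : Function.Injective fun z : Z => fun i => φ i z)
    (hZeq : ∀ f : ∀ i, Zv i,
      (∀ p (hp : p ∈ S), r1 p hp (f p.1) = r2 p hp (f p.2.1)) ↔ ∃ z : Z, ∀ i, φ i z = f i)
    -- the `H²`-sets with their simply transitive actions:
    (H : Type) (Hv : Iv → Type) (He : Ie → Type)
    (act : Z → H → H) (actv : ∀ i, Zv i → Hv i → Hv i) (acte : ∀ k, Ze k → He k → He k)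
    (hact1 : ∀ x, act 1 x = x) (hactmul : ∀ z z' x, act (z * z') x = act z (act z' x))
    (hactv1 : ∀ i x, actv i 1 x = x)
    (hactvmul : ∀ i z z' x, actv i (z * z') x = actv i z (actv i z' x))
    (hacte1 : ∀ k x, acte k 1 x = x)
    (hactemul : ∀ k z z' x, acte k (z * z') x = acte k z (acte k z' x))
    (hsimply : ∀ x y : H, ∃! z : Z, act z x = y)
    (hsimplyv : ∀ i (x y : Hv i), ∃! z : Zv i, actv i z x = y)
    (hsimplye : ∀ k (x y : He k), ∃! z : Ze k, acte k z x = y)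
    -- the equivariant restriction maps:
    (ρ : ∀ i, H → Hv i)
    (s1 : ∀ p : Iv × Iv × Ie, p ∈ S → (Hv p.1 → He p.2.2))
    (s2 : ∀ p : Iv × Iv × Ie, p ∈ S → (Hv p.2.1 → He p.2.2))
    (hρequiv : ∀ i z x, ρ i (act z x) = actv i (φ i z) (ρ i x))
    (hs1equiv : ∀ p (hp : p ∈ S) z x, s1 p hp (actv p.1 z x) = acte p.2.2 (r1 p hp z) (s1 p hp x))
    (hs2equiv : ∀ p (hp : p ∈ S) z x,
      s2 p hp (actv p.2.1 z x) = acte p.2.2 (r2 p hp z) (s2 p hp x))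
    (hcomm : ∀ (x : H) p (hp : p ∈ S), s1 p hp (ρ p.1 x) = s2 p hp (ρ p.2.1 x))
    -- nonemptiness of the global `H²`:
    (hne : Nonempty H) :
    -- conclusion: `H → ∏ᵢ Hᵢ ⇉ ∏ₖ Hₖ` is an equalizer diagram of sets
    Function.Injective (fun x : H => fun i => ρ i x) ∧
      ∀ β : ∀ i, Hv i, (∀ p (hp : p ∈ S), s1 p hp (β p.1) = s2 p hp (β p.2.1)) →
        ∃! x : H, ∀ i, ρ i x = β i := by
  obtain ⟨x₀⟩ := hne
  have hinj : Function.Injective (fun x : H => fun i => ρ i x) := by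
    intro x y hxy
    obtain ⟨z, hz, -⟩ := hsimply x y
    have hz1 : z = 1 := by
      apply hZinj
      funext i
      have h1 : actv i (φ i z) (ρ i x) = ρ i x := by
        rw [← hρequiv, hz]; exact (congrFun hxy i).symm
      obtain ⟨w, -, hw⟩ := hsimplyv i (ρ i x) (ρ i x)
      simp only [map_one]
      rw [hw _ h1, hw 1 (hactv1 i _)]
    rw [← hz, hz1, hact1]
  refine ⟨hinj, fun β hβ => ?_⟩
  have hf : ∀ i, ∃ z : Zv i, actv i z (ρ i x₀) = β i :=
    fun i => (hsimplyv i (ρ i x₀) (β i)).exists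
  choose f hfs using hf
  obtain ⟨z, hz⟩ := (hZeq f).mp (by
    intro p hp
    have h1 : acte p.2.2 (r1 p hp (f p.1)) (s1 p hp (ρ p.1 x₀)) = s1 p hp (β p.1) := by
      rw [← hs1equiv, hfs]
    have h2 : acte p.2.2 (r2 p hp (f p.2.1)) (s2 p hp (ρ p.2.1 x₀)) = s2 p hp (β p.2.1) := by
      rw [← hs2equiv, hfs]
    obtain ⟨w, -, hw⟩ := hsimplye p.2.2 (s1 p hp (ρ p.1 x₀)) (s1 p hp (β p.1))
    exact (hw _ h1).trans (hw _ (show acte p.2.2 (r2 p hp (f p.2.1)) (s1 p hp (ρ p.1 x₀)) = s1 p hp (β p.1) by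
      rw [hcomm x₀ p hp, h2, hβ p hp])).symm)
  refine ⟨act z x₀, fun i => by rw [hρequiv, hz, hfs], fun y hy => ?_⟩
  apply hinj
  funext i
  show ρ i y = ρ i (act z x₀)
  rw [hy i, hρequiv, hz, hfs]
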